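/- A cubic (3-regular) graph cannot have exactly one Hamilton cycle: if a finite cubic graph contains a Hamilton cycle, then it contains at least three Hamilton cycles. -/

import Mathlib

/-- `H` is a Hamilton cycle of `G`, viewed as a subgraph: a connected spanning
2-regular subgraph. -/
def IsHamiltonianCycleSubgraph {V : Type*} (G H : SimpleGraph V) : Prop :=
  H ≤ G ∧ H.Connected ∧ ∀ v : V, (H.neighborSet v).ncard = 2

/-- The number of Hamilton cycles of `G`, counted as subgraphs. -/
noncomputable def hamCount {V : Type*} (G : SimpleGraph V) : ℕ :=
  Nat.card {H : SimpleGraph V // IsHamiltonianCycleSubgraph G H}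

open SimpleGraph List

set_option linter.unusedSectionVars false

section Prelim
variable {V : Type*} [Fintype V]

lemma nbhd_pair {H : SimpleGraph V} (hreg : ∀ w, (H.neighborSet w).ncard = 2)
    {c a b : V} (ha : H.Adj c a) (hb : H.Adj c b) (hne : a ≠ b) :
    H.neighborSet c = {a, b} := by
  have hfin : (H.neighborSet c).Finite := Set.toFinite _
  have hsub : ({a, b} : Set V) ⊆ H.neighborSet c := by
    rintro x (rfl | rfl) <;> simpa [SimpleGraph.mem_neighborSet] using (by assumption)
  have : (H.neighborSet c).ncard ≤ ({a, b} : Set V).ncard := by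
    rw [hreg c, Set.ncard_pair hne]
  exact (Set.eq_of_subset_of_ncard_le hsub this hfin).symm

lemma two_regular_eq {H K : SimpleGraph V} (hle : H ≤ K)
    (hH : ∀ w, (H.neighborSet w).ncard = 2) (hK : ∀ w, (K.neighborSet w).ncard = 2) :
    H = K := by
  ext x y
  refine ⟨fun h => hle h, fun h => ?_⟩
  have hsub : H.neighborSet x ⊆ K.neighborSet x := fun z hz => hle hz
  have heq : H.neighborSet x = K.neighborSet x :=
    Set.eq_of_subset_of_ncard_le hsub (by rw [hH, hK]) (Set.toFinite _)
  have hy : y ∈ K.neighborSet x := h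
  rw [← heq] at hy
  exact hy

lemma cyc_adj_iff {n : ℕ} [NeZero n] (hn : 3 ≤ n) {i j : Fin n} :
    (SimpleGraph.cycleGraph n).Adj i j ↔ j = i - 1 ∨ j = i + 1 := by
  rw [SimpleGraph.cycleGraph_adj']
  have h1 : (1 : Fin n).val = 1 := by
    rw [Fin.val_one']; exact Nat.mod_eq_of_lt (by omega)
  have key : ∀ a b : Fin n, (a - b).val = 1 ↔ a - b = 1 := by
    intro a b
    rw [Fin.ext_iff, h1]
  have k1 : i - j = 1 ↔ j = i - 1 := by
    rw [sub_eq_iff_eq_add, eq_sub_iff_add_eq, eq_comm, add_comm]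
  have k2 : j - i = 1 ↔ j = i + 1 := by
    rw [sub_eq_iff_eq_add, add_comm]
  rw [key, key, k1, k2]

open Fin.CommRing in
lemma sub_one_ne_add_one {n : ℕ} [NeZero n] (hn : 3 ≤ n) (i : Fin n) : i - 1 ≠ i + 1 := by
  intro h2
  have h0 : (2 : Fin n) = 0 := by
    calc (2 : Fin n) = (i + 1) - (i - 1) := by ring
    _ = 0 := by rw [h2, sub_self]
  have hv : ((2 : Fin n)).val = 2 % n := rfl
  rw [h0] at hv
  simp only [Fin.val_zero] at hv
  have := Nat.mod_eq_of_lt (show 2 < n by omega)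
  omega

/-- The graph on `V` obtained by transporting the cycle graph along an equivalence. -/
def HofE {n : ℕ} (e : Fin n ≃ V) : SimpleGraph V :=
  SimpleGraph.map e.toEmbedding (cycleGraph n)

lemma HofE_adj {n : ℕ} (e : Fin n ≃ V) {x y : V} :
    (HofE e).Adj x y ↔ (cycleGraph n).Adj (e.symm x) (e.symm y) := by
  simp only [HofE, SimpleGraph.map_adj, Equiv.coe_toEmbedding]
  constructor
  · rintro ⟨-, i, j, h, rfl, rfl⟩; simpa using h
  · intro h; exact ⟨fun hxy => h.ne (by rw [hxy]), e.symm x, e.symm y, h, by simp, by simp⟩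

lemma HofE_adj_apply {n : ℕ} [NeZero n] (hn : 3 ≤ n) (e : Fin n ≃ V) (i : Fin n) :
    (HofE e).Adj (e i) (e (i + 1)) := by
  rw [HofE_adj]
  simp only [Equiv.symm_apply_apply]
  rw [cyc_adj_iff hn]
  right; rfl

lemma HofE_neighborSet {n : ℕ} [NeZero n] (hn : 3 ≤ n) (e : Fin n ≃ V) (x : V) :
    (HofE e).neighborSet x = {e (e.symm x - 1), e (e.symm x + 1)} := by
  ext y
  simp only [SimpleGraph.mem_neighborSet, HofE_adj, cyc_adj_iff hn,
    Set.mem_insert_iff, Set.mem_singleton_iff]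
  constructor
  · rintro (h | h)
    · left; rw [← h]; simp
    · right; rw [← h]; simp
  · rintro (rfl | rfl)
    · left; simp
    · right; simp

lemma HofE_ncard_neighborSet {n : ℕ} [NeZero n] (hn : 3 ≤ n) (e : Fin n ≃ V) (x : V) :
    ((HofE e).neighborSet x).ncard = 2 := by
  rw [HofE_neighborSet hn]
  exact Set.ncard_pair (fun h => sub_one_ne_add_one hn (e.symm x) (e.injective h))

lemma HofE_connected {n : ℕ} [NeZero n] (hn : 3 ≤ n) (e : Fin n ≃ V) :
    (HofE e).Connected := by
  have hcon : (cycleGraph n).Connected := by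
    rcases Nat.exists_eq_add_of_le (show 1 ≤ n by omega) with ⟨m, hm⟩
    subst hm
    rw [Nat.add_comm]
    exact cycleGraph_connected
  refine Connected.map ⟨e, ?_⟩ e.surjective hcon
  intro a b h
  rw [HofE_adj]
  simpa using h

end Prelim

section Part2
variable {V : Type*} [Fintype V]

/-- A Hamiltonian path in `G` starting with the edge `u v`, as a list. -/
def HamPath (G : SimpleGraph V) (u v : V) (l : List V) : Prop :=
  l.Nodup ∧ l.length = Fintype.card V ∧ l.IsChain G.Adj ∧ l.take 2 = [u, v]

/-- The last vertex of `l` is adjacent to `u`. -/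
def Closes (G : SimpleGraph V) (u : V) (l : List V) : Prop :=
  ∀ w ∈ l.getLast?, G.Adj w u

lemma take_two_cons {l : List V} {u v : V} (h : l.take 2 = [u, v]) :
    ∃ t, l = u :: v :: t := by
  refine ⟨l.drop 2, ?_⟩
  have h2 := List.take_append_drop 2 l
  rw [h] at h2
  exact h2.symm

lemma fin_add_one_lt {n : ℕ} [NeZero n] (hn : 2 ≤ n) {i : ℕ} (hi : i < n) (hi1 : i + 1 < n) :
    (⟨i, hi⟩ : Fin n) + 1 = ⟨i + 1, hi1⟩ := by
  rw [Fin.add_def]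
  apply Fin.ext
  simp only []
  have h1 : (1 : Fin n).val = 1 := by
    rw [Fin.val_one']; exact Nat.mod_eq_of_lt (by omega)
  rw [h1]
  exact Nat.mod_eq_of_lt hi1

lemma fin_add_one_last {n : ℕ} [NeZero n] (hn : 2 ≤ n) (h1 : n - 1 < n) (h0 : 0 < n) :
    (⟨n - 1, h1⟩ : Fin n) + 1 = ⟨0, h0⟩ := by
  rw [Fin.add_def]
  apply Fin.ext
  simp only []
  have hv1 : (1 : Fin n).val = 1 := by
    rw [Fin.val_one']; exact Nat.mod_eq_of_lt (by omega)
  rw [hv1]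
  simp [Nat.sub_add_cancel (show 1 ≤ n by omega)]

/-- The equivalence `Fin n ≃ V` coming from a duplicate-free list of full length. -/
noncomputable def listEquiv (l : List V) (hnd : l.Nodup) (hlen : l.length = Fintype.card V) :
    Fin (Fintype.card V) ≃ V := by
  refine Equiv.ofBijective (fun i => l.get (Fin.cast hlen.symm i)) ?_
  rw [Fintype.bijective_iff_injective_and_card]
  refine ⟨?_, by simp⟩
  intro i j hij
  have := List.nodup_iff_injective_get.mp hnd hij
  have h2 := congrArg Fin.val this
  exact Fin.ext h2

lemma listEquiv_get (l : List V) (h : l.Nodup ∧ l.length = Fintype.card V)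
    {i : ℕ} (hi : i < l.length) (hi' : i < Fintype.card V) :
    listEquiv l h.1 h.2 ⟨i, hi'⟩ = l.get ⟨i, hi⟩ := rfl

/-- The Hamilton-cycle subgraph associated to a cyclic list. -/
noncomputable def HofL (l : List V) (h : l.Nodup ∧ l.length = Fintype.card V) :
    SimpleGraph V := HofE (listEquiv l h.1 h.2)

lemma head_eq_get {l : List V} (hne : l ≠ []) (h0 : 0 < l.length) :
    l.head hne = l.get ⟨0, h0⟩ := by
  rcases l with _ | ⟨a, t⟩
  · exact absurd rfl hne
  · rfl

/-- Adjacency of cyclically consecutive list entries. -/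
lemma adjE_of_chain {K : SimpleGraph V} {l : List V} (h : l.Nodup ∧ l.length = Fintype.card V)
    [NeZero (Fintype.card V)] (hn : 3 ≤ Fintype.card V)
    (hch : l.IsChain K.Adj) (hne : l ≠ []) (hcl : K.Adj (l.getLast hne) (l.head hne))
    (i : Fin (Fintype.card V)) :
    K.Adj (listEquiv l h.1 h.2 i) (listEquiv l h.1 h.2 (i + 1)) := by
  rcases i with ⟨iv, hiv⟩
  rcases Nat.lt_or_ge (iv + 1) (Fintype.card V) with hlt | hge
  · rw [fin_add_one_lt (by omega) hiv hlt,
      listEquiv_get l h (by rw [h.2]; omega), listEquiv_get l h (by rw [h.2]; omega)]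
    exact List.isChain_iff_getElem.mp hch iv (by rw [h.2]; omega)
  · have hiv' : iv = Fintype.card V - 1 := by omega
    subst hiv'
    rw [fin_add_one_last (by omega) hiv (by omega),
      listEquiv_get l h (by rw [h.2]; omega), listEquiv_get l h (by rw [h.2]; omega)]
    have hlast : l.getLast hne = l.get ⟨Fintype.card V - 1, by rw [h.2]; omega⟩ := by
      rw [List.getLast_eq_getElem, List.get_eq_getElem]
      congr 1
      simp [h.2]
    rw [← hlast, ← head_eq_get hne (by rw [h.2]; omega)]
    exact hcl

open Fin.CommRing in
lemma HofL_le {K : SimpleGraph V} {l : List V} (h : l.Nodup ∧ l.length = Fintype.card V)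
    [NeZero (Fintype.card V)] (hn : 3 ≤ Fintype.card V)
    (hch : l.IsChain K.Adj) (hne : l ≠ []) (hcl : K.Adj (l.getLast hne) (l.head hne)) :
    HofL l h ≤ K := by
  intro x y hxy
  have hxy' : (HofE (listEquiv l h.1 h.2)).Adj x y := hxy
  rw [HofE_adj, cyc_adj_iff hn] at hxy'
  set e := listEquiv l h.1 h.2 with he
  rcases hxy' with hy | hy
  · have hx : e.symm x = e.symm y + 1 := by rw [hy]; ring
    have := adjE_of_chain h hn hch hne hcl (e.symm y)
    rw [← he, ← hx] at this
    simp only [Equiv.apply_symm_apply] at this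
    exact this.symm
  · have := adjE_of_chain h hn hch hne hcl (e.symm x)
    rw [← he, ← hy] at this
    simp only [Equiv.apply_symm_apply] at this
    exact this

lemma HofL_chain' {l : List V} (h : l.Nodup ∧ l.length = Fintype.card V)
    [NeZero (Fintype.card V)] (hn : 3 ≤ Fintype.card V) :
    l.IsChain (HofL l h).Adj := by
  rw [List.isChain_iff_getElem]
  intro i hi
  have hi1 : i < Fintype.card V := by rw [← h.2]; omega
  have hi2 : i + 1 < Fintype.card V := by rw [← h.2]; omega
  have := HofE_adj_apply hn (listEquiv l h.1 h.2) ⟨i, hi1⟩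
  rw [fin_add_one_lt (by omega) hi1 hi2,
    listEquiv_get l h (by omega), listEquiv_get l h (by rw [h.2]; omega)] at this
  exact this

lemma HofL_adj_last_head {l : List V} (h : l.Nodup ∧ l.length = Fintype.card V)
    [NeZero (Fintype.card V)] (hn : 3 ≤ Fintype.card V) (hne : l ≠ []) :
    (HofL l h).Adj (l.getLast hne) (l.head hne) := by
  have := HofE_adj_apply hn (listEquiv l h.1 h.2) ⟨Fintype.card V - 1, by omega⟩
  rw [fin_add_one_last (by omega) (by omega) (by omega),
    listEquiv_get l h (by rw [h.2]; omega), listEquiv_get l h (by rw [h.2]; omega)] at this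
  have hlast : l.getLast hne = l.get ⟨Fintype.card V - 1, by rw [h.2]; omega⟩ := by
    rw [List.getLast_eq_getElem, List.get_eq_getElem]
    congr 1
    simp [h.2]
  rw [hlast, head_eq_get hne (by rw [h.2]; omega)]
  exact this

lemma HofL_regular {l : List V} (h : l.Nodup ∧ l.length = Fintype.card V)
    [NeZero (Fintype.card V)] (hn : 3 ≤ Fintype.card V) (x : V) :
    ((HofL l h).neighborSet x).ncard = 2 :=
  HofE_ncard_neighborSet hn (listEquiv l h.1 h.2) x

lemma HofL_connected {l : List V} (h : l.Nodup ∧ l.length = Fintype.card V)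
    [NeZero (Fintype.card V)] (hn : 3 ≤ Fintype.card V) :
    (HofL l h).Connected :=
  HofE_connected hn (listEquiv l h.1 h.2)

end Part2

section Part3
variable {V : Type*} [Fintype V]

/-- In a 2-regular graph, a full-length chain is determined by its first two entries. -/
lemma chain_eq {K : SimpleGraph V} (hreg : ∀ w, (K.neighborSet w).ncard = 2)
    {u v : V} {l l' : List V}
    (h1 : l.Nodup) (h2 : l.length = Fintype.card V) (h3 : l.IsChain K.Adj)
    (h4 : l.take 2 = [u, v])
    (h1' : l'.Nodup) (h2' : l'.length = Fintype.card V) (h3' : l'.IsChain K.Adj)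
    (h4' : l'.take 2 = [u, v]) : l = l' := by
  have hlen : l.length = l'.length := by rw [h2, h2']
  obtain ⟨t, ht⟩ := take_two_cons h4
  obtain ⟨t', ht'⟩ := take_two_cons h4'
  have claim : ∀ i, ∀ (hi : i < l.length) (hi' : i < l'.length),
      l.get ⟨i, hi⟩ = l'.get ⟨i, hi'⟩ := by
    intro i
    induction i using Nat.strong_induction_on with
    | _ i ih =>
      match i with
      | 0 => intro hi hi'; rw [List.get_of_eq ht, List.get_of_eq ht']; rfl
      | 1 => intro hi hi'; rw [List.get_of_eq ht, List.get_of_eq ht']; rfl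
      | (k+2) =>
        intro hi hi'
        have hk : k < l.length := by omega
        have hk1 : k + 1 < l.length := by omega
        have hk' : k < l'.length := by omega
        have hk1' : k + 1 < l'.length := by omega
        have e0 : l.get ⟨k, hk⟩ = l'.get ⟨k, hk'⟩ := ih k (by omega) hk hk'
        have e1 : l.get ⟨k+1, hk1⟩ = l'.get ⟨k+1, hk1'⟩ := ih (k+1) (by omega) hk1 hk1'
        have ha1 : K.Adj (l.get ⟨k, hk⟩) (l.get ⟨k+1, hk1⟩) :=
          List.isChain_iff_getElem.mp h3 k (by omega)
        have ha2 : K.Adj (l.get ⟨k+1, hk1⟩) (l.get ⟨k+2, hi⟩) :=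
          List.isChain_iff_getElem.mp h3 (k+1) (by omega)
        have ha1' : K.Adj (l'.get ⟨k, hk'⟩) (l'.get ⟨k+1, hk1'⟩) :=
          List.isChain_iff_getElem.mp h3' k (by omega)
        have ha2' : K.Adj (l'.get ⟨k+1, hk1'⟩) (l'.get ⟨k+2, hi'⟩) :=
          List.isChain_iff_getElem.mp h3' (k+1) (by omega)
        have hne : l.get ⟨k, hk⟩ ≠ l.get ⟨k+2, hi⟩ := by
          intro h
          have := List.nodup_iff_injective_get.mp h1 h
          simp only [Fin.mk.injEq] at this
          omega
        have hne' : l'.get ⟨k, hk'⟩ ≠ l'.get ⟨k+2, hi'⟩ := by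
          intro h
          have := List.nodup_iff_injective_get.mp h1' h
          simp only [Fin.mk.injEq] at this
          omega
        have hp : K.neighborSet (l.get ⟨k+1, hk1⟩) = {l.get ⟨k, hk⟩, l.get ⟨k+2, hi⟩} :=
          nbhd_pair hreg ha1.symm ha2 hne
        have hp' : K.neighborSet (l'.get ⟨k+1, hk1'⟩) = {l'.get ⟨k, hk'⟩, l'.get ⟨k+2, hi'⟩} :=
          nbhd_pair hreg ha1'.symm ha2' hne'
        have hmem : l.get ⟨k+2, hi⟩ ∈ K.neighborSet (l.get ⟨k+1, hk1⟩) := ha2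
        rw [← e1, ← e0] at hp'
        rw [hp'] at hmem
        rcases hmem with h | h
        · exact absurd h.symm hne
        · exact h
  exact List.ext_get hlen claim

/-- The neighbor of `y` other than `x`, in a 2-regular graph. -/
noncomputable def otherN (H : SimpleGraph V) (x y : V) : V :=
  haveI : Nonempty V := ⟨x⟩
  Classical.epsilon (fun z => H.Adj y z ∧ z ≠ x)

lemma otherN_spec {H : SimpleGraph V} (hreg : ∀ w, (H.neighborSet w).ncard = 2)
    {x y : V} (hxy : H.Adj x y) : H.Adj y (otherN H x y) ∧ otherN H x y ≠ x := by
  haveI : Nonempty V := ⟨x⟩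
  show (fun z => H.Adj y z ∧ z ≠ x) (Classical.epsilon (fun z => H.Adj y z ∧ z ≠ x))
  apply Classical.epsilon_spec (p := fun z => H.Adj y z ∧ z ≠ x)
  obtain ⟨a, b, hab, hset⟩ := Set.ncard_eq_two.mp (hreg y)
  have hx : x ∈ H.neighborSet y := hxy.symm
  have hmema : a ∈ H.neighborSet y := by rw [hset]; left; rfl
  have hmemb : b ∈ H.neighborSet y := by rw [hset]; right; rfl
  rw [hset] at hx
  rcases hx with rfl | rfl
  · exact ⟨b, hmemb, hab.symm⟩
  · exact ⟨a, hmema, hab⟩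

lemma otherN_unique {H : SimpleGraph V} (hreg : ∀ w, (H.neighborSet w).ncard = 2)
    {x y z : V} (hxy : H.Adj x y) (hz : H.Adj y z) (hne : z ≠ x) : z = otherN H x y := by
  obtain ⟨hadj, hnex⟩ := otherN_spec hreg hxy
  have hpair : H.neighborSet y = {x, z} := nbhd_pair hreg hxy.symm hz (Ne.symm hne)
  have : otherN H x y ∈ H.neighborSet y := hadj
  rw [hpair] at this
  rcases this with h | h
  · exact absurd h hnex
  · exact h.symm

end Part3

section Part4
variable {V : Type*} [Fintype V]

/-- The non-backtracking walk in a 2-regular graph, as a stream of pairs. -/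
noncomputable def walkPair (H : SimpleGraph V) (u v : V) : ℕ → V × V
  | 0 => (u, v)
  | (k+1) => ((walkPair H u v k).2, otherN H (walkPair H u v k).1 (walkPair H u v k).2)

/-- The non-backtracking walk in a 2-regular graph. -/
noncomputable def wS (H : SimpleGraph V) (u v : V) (k : ℕ) : V := (walkPair H u v k).1

variable {H : SimpleGraph V} {u v : V}

lemma wS_zero : wS H u v 0 = u := rfl
lemma wS_one : wS H u v 1 = v := rfl
lemma wS_rec (k : ℕ) : wS H u v (k+2) = otherN H (wS H u v k) (wS H u v (k+1)) := rfl

section withreg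
variable (hreg : ∀ w, (H.neighborSet w).ncard = 2) (huv : H.Adj u v)
include hreg huv

lemma wS_adj : ∀ k, H.Adj (wS H u v k) (wS H u v (k+1)) := by
  intro k
  induction k with
  | zero => exact huv
  | succ k ih =>
    rw [wS_rec]
    exact (otherN_spec hreg ih).1

lemma wS_ne2 (k : ℕ) : wS H u v (k+2) ≠ wS H u v k := by
  rw [wS_rec]
  exact (otherN_spec hreg (wS_adj hreg huv k)).2

lemma wS_back (k : ℕ) : wS H u v k = otherN H (wS H u v (k+2)) (wS H u v (k+1)) :=
  otherN_unique hreg (wS_adj hreg huv (k+1)).symm (wS_adj hreg huv k).symm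
    (Ne.symm (wS_ne2 hreg huv k))

lemma wS_fwd {i j : ℕ} (h0 : wS H u v i = wS H u v j) (h1 : wS H u v (i+1) = wS H u v (j+1)) :
    ∀ t, wS H u v (i+t) = wS H u v (j+t) := by
  intro t
  induction t using Nat.strong_induction_on with
  | _ t ih =>
    match t with
    | 0 => exact h0
    | 1 => exact h1
    | (s+2) =>
      have e0 := ih s (by omega)
      have e1 := ih (s+1) (by omega)
      show wS H u v ((i+s)+2) = wS H u v ((j+s)+2)
      rw [wS_rec, wS_rec]
      rw [show (i+s)+1 = i+(s+1) from rfl, show (j+s)+1 = j+(s+1) from rfl, e0, e1]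

lemma wS_bwd1 {i j : ℕ} (h1 : wS H u v (i+1) = wS H u v (j+1))
    (h2 : wS H u v (i+2) = wS H u v (j+2)) : wS H u v i = wS H u v j := by
  rw [wS_back hreg huv i, wS_back hreg huv j, h1, h2]

lemma wS_bwd : ∀ (t : ℕ) {i j : ℕ}, t ≤ i → t ≤ j → wS H u v i = wS H u v j →
    wS H u v (i+1) = wS H u v (j+1) →
    wS H u v (i-t) = wS H u v (j-t) ∧ wS H u v (i-t+1) = wS H u v (j-t+1) := by
  intro t
  induction t with
  | zero => intro i j _ _ h0 h1; exact ⟨h0, h1⟩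
  | succ t ih =>
    intro i j hti htj h0 h1
    obtain ⟨e0, e1⟩ := ih (by omega) (by omega) h0 h1
    have hi1 : i - t = (i - (t+1)) + 1 := by omega
    have hj1 : j - t = (j - (t+1)) + 1 := by omega
    rw [hi1, hj1] at e0 e1
    exact ⟨wS_bwd1 hreg huv e0 e1, e0⟩

lemma wS_period : ∃ m, 0 < m ∧ wS H u v m = wS H u v 0 ∧ wS H u v (m+1) = wS H u v 1 := by
  have key : ∀ i j, i < j → walkPair H u v i = walkPair H u v j →
      ∃ m, 0 < m ∧ wS H u v m = wS H u v 0 ∧ wS H u v (m+1) = wS H u v 1 := by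
    intro i j hij heq
    have h0 : wS H u v i = wS H u v j := congrArg Prod.fst heq
    have h1 : wS H u v (i+1) = wS H u v (j+1) := congrArg Prod.snd heq
    obtain ⟨e0, e1⟩ := wS_bwd hreg huv i (le_refl i) (le_of_lt hij) h0 h1
    rw [Nat.sub_self] at e0 e1
    exact ⟨j - i, by omega, e0.symm, e1.symm⟩
  obtain ⟨i, j, hne, heq⟩ := Finite.exists_ne_map_eq_of_infinite (walkPair H u v)
  rcases Nat.lt_or_ge i j with h | h
  · exact key i j h heq
  · exact key j i (by omega) heq.symm

lemma wS_nbhd (k : ℕ) :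
    H.neighborSet (wS H u v (k+1)) = {wS H u v k, wS H u v (k+2)} :=
  nbhd_pair hreg (wS_adj hreg huv k).symm (wS_adj hreg huv (k+1))
    (Ne.symm (wS_ne2 hreg huv k))

end withreg

/-- Extraction of a Hamiltonian cyclic list from a connected 2-regular graph. -/
lemma exists_hamlist (hreg : ∀ w, (H.neighborSet w).ncard = 2)
    (hconn : H.Connected) (huv : H.Adj u v) (hn : 2 ≤ Fintype.card V) :
    ∃ l : List V, (l.Nodup ∧ l.length = Fintype.card V) ∧ l.IsChain H.Adj ∧
      l.take 2 = [u, v] ∧ ∀ w ∈ l.getLast?, H.Adj w u := by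
  classical
  have hex : ∃ m, 0 < m ∧ wS H u v m = wS H u v 0 ∧ wS H u v (m+1) = wS H u v 1 :=
    wS_period hreg huv
  set m := Nat.find hex with hmdef
  obtain ⟨hm0, hmA, hmB⟩ : 0 < m ∧ wS H u v m = wS H u v 0 ∧ wS H u v (m+1) = wS H u v 1 :=
    Nat.find_spec hex
  have hper : ∀ k, wS H u v (k + m) = wS H u v k := by
    intro k
    have := wS_fwd hreg huv (i := m) (j := 0) hmA hmB k
    rw [Nat.zero_add] at this
    rw [Nat.add_comm]
    exact this
  have hmod : ∀ k, wS H u v k = wS H u v (k % m) := by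
    intro k
    induction k using Nat.strong_induction_on with
    | _ k ih =>
      rcases Nat.lt_or_ge k m with h | h
      · rw [Nat.mod_eq_of_lt h]
      · have hk : k = (k - m) + m := by omega
        rw [hk, hper (k - m), ih (k - m) (by omega)]
        congr 1
        exact (Nat.add_mod_right _ _).symm
  have hcore : ∀ i j, 1 ≤ i → i < j → j - i < m → wS H u v i ≠ wS H u v j := by
    intro i j hi1 hij hd haij
    obtain ⟨i1, rfl⟩ : ∃ i1, i = i1 + 1 := ⟨i - 1, by omega⟩
    obtain ⟨j1, rfl⟩ : ∃ j1, j = j1 + 1 := ⟨j - 1, by omega⟩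
    have hmem : wS H u v (i1 + 2) ∈ H.neighborSet (wS H u v (j1+1)) := by
      rw [← haij, wS_nbhd hreg huv i1]
      right; rfl
    rw [wS_nbhd hreg huv j1] at hmem
    rcases hmem with hB | hA
    · -- reverse collision : a (i+1) = a (j-1)
      have hrev : ∀ t, t ≤ (j1+1) - (i1+1) → wS H u v ((i1+1) + t) = wS H u v ((j1+1) - t) := by
        intro t
        induction t using Nat.strong_induction_on with
        | _ t iht =>
          match t with
          | 0 => intro _; exact haij
          | 1 => intro _; rw [show (j1+1) - 1 = j1 from rfl]; exact hB
          | (s+2) =>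
            intro hts
            have e0 := iht s (by omega) (by omega)
            have e1 := iht (s+1) (by omega) (by omega)
            show wS H u v ((i1+1+s)+2) = wS H u v _
            rw [wS_rec]
            rw [show (i1+1+s)+1 = (i1+1)+(s+1) from rfl, show i1+1+s = (i1+1)+s from rfl,
              e0, e1]
            have hb := wS_back hreg huv ((j1+1) - (s+2))
            rw [show (j1+1) - (s+2) + 2 = (j1+1) - s from by omega,
              show (j1+1) - (s+2) + 1 = (j1+1) - (s+1) from by omega] at hb
            exact hb.symm
      rcases Nat.even_or_odd ((j1+1) - (i1+1)) with ⟨s, hs⟩ | ⟨s, hs⟩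
      · have hs1 : 1 ≤ s := by omega
        have := hrev (s-1) (by omega)
        rw [show (j1+1) - (s-1) = ((i1+1) + (s-1)) + 2 from by omega] at this
        exact wS_ne2 hreg huv ((i1+1)+(s-1)) this.symm
      · have := hrev s (by omega)
        rw [show (j1+1) - s = ((i1+1) + s) + 1 from by omega] at this
        exact (wS_adj hreg huv ((i1+1)+s)).ne this
    · -- forward collision: pairs at i and j agree
      obtain ⟨e0, e1⟩ := wS_bwd hreg huv (i1+1) (le_refl _) (by omega) haij
        (by rw [show i1+1+1 = i1+2 from rfl, show j1+1+1 = j1+2 from rfl]; exact hA)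
      rw [Nat.sub_self] at e0 e1
      have hPd : 0 < (j1+1) - (i1+1) ∧ wS H u v ((j1+1) - (i1+1)) = wS H u v 0 ∧
          wS H u v (((j1+1) - (i1+1))+1) = wS H u v 1 := by
        refine ⟨by omega, e0.symm, ?_⟩
        simpa using e1.symm
      exact Nat.find_min hex (by omega) hPd
  -- the candidate list
  have hlen : ((List.range m).map (wS H u v)).length = m := by simp
  have hget : ∀ i (hi : i < ((List.range m).map (wS H u v)).length),
      ((List.range m).map (wS H u v)).get ⟨i, hi⟩ = wS H u v i := by
    intro i hi
    simp
  have hnodup : ((List.range m).map (wS H u v)).Nodup := by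
    refine List.Nodup.map_on ?_ List.nodup_range
    intro x hx y hy hxy
    rw [List.mem_range] at hx hy
    by_contra hne
    rcases Nat.lt_or_ge x y with h | h
    · rcases Nat.eq_zero_or_pos x with rfl | hx1
      · exact hcore y m (by omega) (by omega) (by omega) (hxy.symm.trans hmA.symm)
      · exact hcore x y hx1 h (by omega) hxy
    · have h' : y < x := by omega
      rcases Nat.eq_zero_or_pos y with rfl | hy1
      · exact hcore x m (by omega) (by omega) (by omega) (hxy.trans hmA.symm)
      · exact hcore y x hy1 h' (by omega) hxy.symm
  have hmle : m ≤ Fintype.card V := by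
    rw [← hlen]
    exact hnodup.length_le_card
  have hstep : ∀ x y, (∃ k, wS H u v k = x) → H.Adj x y → ∃ k, wS H u v k = y := by
    rintro x y ⟨k, rfl⟩ hxy
    obtain ⟨k1, hk1⟩ : ∃ k1, k + m = k1 + 1 := ⟨k + m - 1, by omega⟩
    have hx' : wS H u v (k1 + 1) = wS H u v k := by rw [← hk1]; exact hper k
    have hymem : y ∈ H.neighborSet (wS H u v (k1+1)) := by rw [hx']; exact hxy
    rw [wS_nbhd hreg huv k1] at hymem
    rcases hymem with h | h
    · exact ⟨k1, h.symm⟩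
    · exact ⟨k1 + 2, h.symm⟩
  have hcover : ∀ x, ∃ k, wS H u v k = x := by
    intro x
    have claim : ∀ y z (p : H.Walk y z), (∃ k, wS H u v k = y) → ∃ k, wS H u v k = z := by
      intro y z p
      induction p with
      | nil => exact id
      | cons hadj q ih => intro hy; exact ih (hstep _ _ hy hadj)
    exact claim u x ((hconn.preconnected u x).some) ⟨0, rfl⟩
  have hcard : Fintype.card V ≤ m := by
    have hsub : ∀ x : V, x ∈ ((List.range m).map (wS H u v)).toFinset := by
      intro x
      obtain ⟨k, hk⟩ := hcover x
      rw [List.mem_toFinset, List.mem_map]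
      exact ⟨k % m, List.mem_range.mpr (Nat.mod_lt _ hm0), by rw [← hmod k, hk]⟩
    calc Fintype.card V = Finset.univ.card := rfl
      _ ≤ ((List.range m).map (wS H u v)).toFinset.card :=
          Finset.card_le_card (fun x _ => hsub x)
      _ = ((List.range m).map (wS H u v)).length := List.toFinset_card_of_nodup hnodup
      _ = m := hlen
  have hmeq : m = Fintype.card V := le_antisymm hmle hcard
  refine ⟨(List.range m).map (wS H u v), ⟨hnodup, by rw [hlen, hmeq]⟩, ?_, ?_, ?_⟩
  · rw [List.isChain_iff_getElem]
    intro i hi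
    simp only [List.getElem_map, List.getElem_range]
    exact wS_adj hreg huv i
  · have h2m : 2 ≤ m := by omega
    have ht : List.take 2 (List.range m) = List.range 2 := by
      rw [List.take_range]
      congr 1
      omega
    rw [← List.map_take, ht]
    rw [show List.range 2 = [0, 1] from rfl]
    simp only [List.map_cons, List.map_nil]
    rw [wS_zero, wS_one]
  · intro w hw
    have hne : ((List.range m).map (wS H u v)) ≠ [] := by
      intro h
      rw [h] at hlen
      simp at hlen
      omega
    rw [List.getLast?_eq_getLast hne] at hw
    have hw' : w = ((List.range m).map (wS H u v)).getLast hne := by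
      injection hw.symm  -- hw : some (getLast) = some w
    rw [List.getLast_eq_getElem] at hw'
    simp only [List.getElem_map, List.getElem_range, List.length_map, List.length_range] at hw'
    subst hw'
    have := wS_adj hreg huv (m-1)
    rw [show m - 1 + 1 = m from by omega, hmA, wS_zero] at this
    exact this

end Part4

section Part5
variable {V : Type*} [Fintype V] [DecidableEq V]

/-- Rotation of a Hamiltonian path at vertex `x`: keep the part before `x`,
reverse the part after `x`. -/
def rotFun (l : List V) (x : V) : List V :=
  l.takeWhile (fun z => decide (z ≠ x)) ++ x :: ((l.dropWhile (fun z => decide (z ≠ x))).tail).reverse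

lemma tw_dw {x : V} : ∀ (a b : List V), x ∉ a →
    (a ++ x :: b).takeWhile (fun z => decide (z ≠ x)) = a ∧
    (a ++ x :: b).dropWhile (fun z => decide (z ≠ x)) = x :: b := by
  intro a
  induction a with
  | nil =>
    intro b _
    constructor <;> simp [List.takeWhile_cons, List.dropWhile_cons]
  | cons a0 t ih =>
    intro b hmem
    have h0 : a0 ≠ x := by intro h; exact hmem (by simp [h])
    have ht : x ∉ t := fun h => hmem (List.mem_cons_of_mem _ h)
    obtain ⟨h1, h2⟩ := ih b ht
    constructor
    · rw [List.cons_append, List.takeWhile_cons_of_pos (by simp [h0]), h1]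
    · rw [List.cons_append, List.dropWhile_cons_of_pos (by simp [h0]), h2]

lemma rotFun_eq {l a b : List V} {x : V} (hxa : x ∉ a) (h : l = a ++ x :: b) :
    rotFun l x = a ++ x :: b.reverse := by
  subst h
  obtain ⟨h1, h2⟩ := tw_dw a b hxa
  rw [rotFun, h1, h2]
  rfl

lemma getLast?_app_cons {a b : List V} {x : V} (hb : b ≠ []) :
    (a ++ x :: b).getLast? = b.getLast? := by
  rw [show a ++ x :: b = (a ++ [x]) ++ b by simp, List.getLast?_append]
  have : b.getLast? = some (b.getLast hb) := List.getLast?_eq_getLast hb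
  rw [this]
  rfl

variable {G : SimpleGraph V} {u v : V}

lemma ham_mem {l : List V} (hp : HamPath G u v l) (z : V) : z ∈ l := by
  have h1 : l.toFinset = Finset.univ :=
    Finset.eq_univ_of_card _ (by rw [List.toFinset_card_of_nodup hp.1, hp.2.1])
  rw [← List.mem_toFinset, h1]
  exact Finset.mem_univ z

lemma flip_adj (G : SimpleGraph V) : flip G.Adj = G.Adj := by
  funext a b
  exact propext ⟨fun h => h.symm, fun h => h.symm⟩

/-- Forward direction: a valid rotation produces a new Hamiltonian path. -/
lemma rot_forward (hn : 4 ≤ Fintype.card V) {l c t0 : List V} {p w x : V}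
    (hp : HamPath G u v l) (hdec : l = c ++ [p, w]) (hcons : l = u :: v :: t0)
    (hadj : G.Adj w x) (hxu : x ≠ u) (hxp : x ≠ p) :
    HamPath G u v (rotFun l x) ∧ rotFun l x ≠ l ∧
      ∃ a b, l = a ++ x :: b ∧ rotFun l x = a ++ x :: b.reverse := by
  obtain ⟨hnd, hlen, hch, ht2⟩ := hp
  have hxl : x ∈ l := ham_mem ⟨hnd, hlen, hch, ht2⟩ x
  obtain ⟨a, b, hab⟩ := List.append_of_mem hxl
  have hnd' : (a ++ x :: b).Nodup := hab ▸ hnd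
  rw [List.nodup_append] at hnd'
  obtain ⟨hnda, hndxb, hdisj⟩ := hnd'
  have hxa : x ∉ a := fun h => hdisj x h x List.mem_cons_self rfl
  have hlw : l.getLast? = some w := by
    rw [hdec, show c ++ [p, w] = (c ++ [p]) ++ [w] by simp, List.getLast?_concat]
  have hbne : b ≠ [] := by
    rintro rfl
    have h1 : l.getLast? = some x := by rw [hab]; exact List.getLast?_concat
    rw [hlw] at h1
    have : w = x := by injection h1
    exact hadj.ne this
  have hbw : b.getLast? = some w := by
    rw [← getLast?_app_cons (a := a) (x := x) hbne, ← hab, hlw]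
  have hblen : 2 ≤ b.length := by
    by_contra hcon
    rcases b with _ | ⟨y, b2⟩
    · exact hbne rfl
    rcases b2 with _ | ⟨z, b3⟩
    · -- b = [y] : then x is the second-to-last, i.e. x = p
      have heq : a ++ [x, y] = c ++ [p, w] := by rw [← hab, ← hdec]
      have hlena : a.length = c.length := by
        have := congrArg List.length heq
        simp at this
        omega
      obtain ⟨h1, h2⟩ := List.append_inj heq hlena
      have : x = p := by injection h2 with h3 h4
      exact hxp this
    · simp at hcon
  -- rotation
  have hrot : rotFun l x = a ++ x :: b.reverse := rotFun_eq hxa hab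
  -- chain decomposition of l
  have hch' : List.IsChain G.Adj (a ++ x :: b) := hab ▸ hch
  rw [List.isChain_append] at hch'
  obtain ⟨hcha, hchxb, hjunc⟩ := hch'
  -- components of new HamPath
  have hperm : (a ++ x :: b.reverse).Perm l := by
    rw [hab]
    exact List.Perm.append_left a (List.Perm.cons x (List.reverse_perm b))
  have hnd2 : (rotFun l x).Nodup := by
    rw [hrot]
    exact hperm.symm.nodup hnd
  have hlen2 : (rotFun l x).length = Fintype.card V := by
    rw [hrot, hperm.length_eq, hlen]
  have hch2 : (rotFun l x).IsChain G.Adj := by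
    rw [hrot, List.isChain_append]
    refine ⟨hcha, ?_, ?_⟩
    · rw [List.isChain_cons]
      constructor
      · intro y hy
        rw [List.head?_reverse, hbw] at hy
        have : y = w := by injection hy.symm
        subst this
        exact hadj.symm
      · rw [List.isChain_reverse]
        exact (List.isChain_cons.mp hchxb).2.imp (fun a b h => h.symm)
    · intro z hz y0 hy0
      have h9 : y0 = x := by have := hy0; simp at this; exact this.symm
      rw [h9]
      exact hjunc z hz x rfl
  have htake2 : (rotFun l x).take 2 = [u, v] := by
    rw [hrot]
    rcases a with _ | ⟨a0, a'⟩
    · exfalso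
      rw [hcons] at hab
      simp at hab
      exact hxu hab.1.symm
    rcases a' with _ | ⟨a1, a''⟩
    · -- a = [a0] : a0 = u, x = v
      rw [hcons] at hab
      simp at hab
      obtain ⟨h1, h2, _⟩ := hab
      subst h1; subst h2
      rfl
    · rw [hcons] at hab
      simp at hab
      obtain ⟨h1, h2, _⟩ := hab
      subst h1; subst h2
      rfl
  have hNE : rotFun l x ≠ l := by
    rw [hrot, hab]
    intro hcon
    have h1 : x :: b.reverse = x :: b := by
      have := List.append_inj hcon rfl
      exact this.2
    have h2 : b.reverse = b := by injection h1
    -- b = y :: b2 with b2 ≠ []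
    rcases b with _ | ⟨y, b2⟩
    · exact hbne rfl
    have hb2ne : b2 ≠ [] := by
      rintro rfl
      simp at hblen
    have h3 : (y :: b2).head? = (y :: b2).getLast? := by
      rw [← List.head?_reverse (l := y :: b2), h2]
    have h4 : (y :: b2).getLast? = some ((y :: b2).getLast (by simp)) :=
      List.getLast?_eq_getLast _
    rw [h4] at h3
    have h5 : y = (y :: b2).getLast (by simp) := by injection h3
    have h6 : (y :: b2).getLast (by simp) = b2.getLast hb2ne := by
      rw [List.getLast_cons hb2ne]
    have h7 : y ∈ b2 := by
      rw [h5, h6]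
      exact List.getLast_mem hb2ne
    have h8 : y ∉ b2 := (List.nodup_cons.mp (List.nodup_cons.mp hndxb).2).1
    exact h8 h7
  exact ⟨⟨hnd2, hlen2, hch2, htake2⟩, hNE, a, b, hab, hrot⟩

/-- Backward direction: any lollipop-neighbor arises from a valid rotation. -/
lemma rot_backward (hn : 4 ≤ Fintype.card V) {l l' c t0 a b : List V} {p w x : V}
    (hp : HamPath G u v l) (hp' : HamPath G u v l')
    (hdec : l = c ++ [p, w]) (hcons : l = u :: v :: t0)
    (hab : l = a ++ x :: b) (hab' : l' = a ++ x :: b.reverse) (hne : l' ≠ l) :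
    (G.Adj w x ∧ x ≠ u ∧ x ≠ p) ∧ l' = rotFun l x := by
  obtain ⟨hnd, hlen, hch, ht2⟩ := hp
  obtain ⟨hnd', hlen', hch', ht2'⟩ := hp'
  have hnd2 : (a ++ x :: b).Nodup := hab ▸ hnd
  rw [List.nodup_append] at hnd2
  obtain ⟨hnda, hndxb, hdisj⟩ := hnd2
  have hxa : x ∉ a := fun h => hdisj x h x List.mem_cons_self rfl
  have hlw : l.getLast? = some w := by
    rw [hdec, show c ++ [p, w] = (c ++ [p]) ++ [w] by simp, List.getLast?_concat]
  have hbne : b ≠ [] := by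
    rintro rfl
    apply hne
    rw [hab', hab]
    rfl
  have hbw : b.getLast? = some w := by
    rw [← getLast?_app_cons (a := a) (x := x) hbne, ← hab, hlw]
  -- adjacency of x and w from the chain of l'
  have hch2 : List.IsChain G.Adj (a ++ x :: b.reverse) := hab' ▸ hch'
  rw [List.isChain_append] at hch2
  obtain ⟨_, hchxb', _⟩ := hch2
  have hadjxw : G.Adj x w := by
    have := (List.isChain_cons.mp hchxb').1
    apply this
    rw [List.head?_reverse, hbw]
    rfl
  -- b has length at least 2
  have hblen : 2 ≤ b.length := by
    rcases b with _ | ⟨y, b2⟩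
    · exact absurd rfl hbne
    rcases b2 with _ | ⟨z, b3⟩
    · exfalso
      apply hne
      rw [hab', hab]
      rfl
    · simp
  -- x ≠ u
  have hxu : x ≠ u := by
    rcases a with _ | ⟨a0, a'⟩
    · -- a = [] : x = u and then w = v, contradiction
      exfalso
      rw [hcons] at hab
      simp at hab
      obtain ⟨hxu', hbvt⟩ := hab
      -- l' = x :: b.reverse, take 2 l' = [u, v]
      obtain ⟨s, hs⟩ := take_two_cons ht2'
      rw [hab'] at hs
      simp at hs
      obtain ⟨hx2, hrest⟩ := hs
      -- head of b.reverse is v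
      have hhd : b.reverse.head? = some v := by
        rw [hrest]
        simp
      rw [List.head?_reverse, hbw] at hhd
      have hwv : w = v := by injection hhd
      -- but w is the last of b = v :: t0, t0 ≠ []
      have ht0ne : t0 ≠ [] := by
        rintro rfl
        rw [hcons] at hlen
        simp at hlen
        omega
      have hbv : b = v :: t0 := by rw [← hbvt]
      rw [hbv] at hbw
      rw [List.getLast?_eq_getLast (by simp)] at hbw
      have : (v :: t0).getLast (by simp) = t0.getLast ht0ne := List.getLast_cons ht0ne
      have hwlast : w = t0.getLast ht0ne := by
        have h5 : some ((v :: t0).getLast (by simp)) = some w := hbw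
        injection h5 with h6
        rw [← h6, this]
      have hvt0 : v ∈ t0 := by
        rw [← hwv] at *
        rw [hwlast]
        exact List.getLast_mem ht0ne
      rw [hcons] at hnd
      have := (List.nodup_cons.mp (List.nodup_cons.mp hnd).2).1
      exact this hvt0
    · -- a = a0 :: a', a0 = u
      rw [hcons] at hab
      have ha0 : a0 = u := by
        have := congrArg (fun t => t.head?) hab
        simpa using this.symm
      intro hxeq
      exact hdisj u (by rw [← ha0]; exact List.mem_cons_self) u
        (by rw [← hxeq]; exact List.mem_cons_self) rfl
  -- x ≠ p
  have hxp : x ≠ p := by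
    -- b = b0 ++ [p', w'] with p' = p
    have hb2 : ∃ b0 p' w', b = b0 ++ [p', w'] := by
      rcases hrb : b.reverse with _ | ⟨r0, rs⟩
      · exfalso
        have : b = [] := by
          have := congrArg List.reverse hrb
          simpa using this
        exact hbne this
      rcases rs with _ | ⟨r1, rr⟩
      · exfalso
        have : b = [r0] := by
          have := congrArg List.reverse hrb
          simpa using this
        rw [this] at hblen
        simp at hblen
      · refine ⟨rr.reverse, r1, r0, ?_⟩
        have := congrArg List.reverse hrb
        simpa using this
    obtain ⟨b0, p', w', hb0⟩ := hb2
    have heq : (a ++ x :: b0) ++ [p', w'] = c ++ [p, w] := by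
      rw [← hdec, hab, hb0]
      simp
    have hlena : (a ++ x :: b0).length = c.length := by
      have := congrArg List.length heq
      simp [List.length_append] at this ⊢
      omega
    obtain ⟨h1, h2⟩ := List.append_inj heq hlena
    have hp'p : p' = p := by injection h2 with h3 h4
    have hxnb : x ∉ b := (List.nodup_cons.mp hndxb).1
    intro hxeq
    apply hxnb
    rw [hb0, hxeq, hp'p]
    simp
  exact ⟨⟨hadjxw.symm, hxu, hxp⟩, by rw [hab', rotFun_eq hxa hab]⟩

/-- Injectivity of rotation in the rotation vertex. -/
lemma rot_inj {l c : List V} {p w x x' : V}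
    (hp : HamPath G u v l) (hdec : l = c ++ [p, w])
    (hx : G.Adj w x) (hx' : G.Adj w x')
    (heq : rotFun l x = rotFun l x') : x = x' := by
  obtain ⟨hnd, hlen, hch, ht2⟩ := hp
  have hmem : x ∈ l := ham_mem ⟨hnd, hlen, hch, ht2⟩ x
  have hmem' : x' ∈ l := ham_mem ⟨hnd, hlen, hch, ht2⟩ x'
  obtain ⟨a, b, hab⟩ := List.append_of_mem hmem
  obtain ⟨a', b', hab'⟩ := List.append_of_mem hmem'
  have hlw : l.getLast? = some w := by
    rw [hdec, show c ++ [p, w] = (c ++ [p]) ++ [w] by simp, List.getLast?_concat]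
  have key : ∀ (aa bb : List V) (xx : V), l = aa ++ xx :: bb → G.Adj w xx →
      bb ≠ [] ∧ xx ∉ aa := by
    intro aa bb xx habb hadj
    have hnd2 : (aa ++ xx :: bb).Nodup := habb ▸ hnd
    rw [List.nodup_append] at hnd2
    refine ⟨?_, fun h => hnd2.2.2 xx h xx List.mem_cons_self rfl⟩
    rintro rfl
    have h1 : l.getLast? = some xx := by rw [habb]; exact List.getLast?_concat
    rw [hlw] at h1
    have : w = xx := by injection h1
    exact hadj.ne this
  obtain ⟨hbne, hxa⟩ := key a b x hab hx
  obtain ⟨hbne', hxa'⟩ := key a' b' x' hab' hx'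
  rw [rotFun_eq hxa hab, rotFun_eq hxa' hab'] at heq
  -- last element of the rotation is the head of b
  have hlast : (a ++ x :: b.reverse).getLast? = b.head? := by
    rw [getLast?_app_cons (by simpa using hbne), List.getLast?_reverse]
  have hlast' : (a' ++ x' :: b'.reverse).getLast? = b'.head? := by
    rw [getLast?_app_cons (by simpa using hbne'), List.getLast?_reverse]
  have hheads : b.head? = b'.head? := by rw [← hlast, ← hlast', heq]
  rcases b with _ | ⟨y, b2⟩
  · exact absurd rfl hbne
  rcases b' with _ | ⟨y', b2'⟩
  · exact absurd rfl hbne'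
  have hyy : y = y' := by
    have : some y = some y' := hheads
    injection this
  subst hyy
  -- two decompositions at y
  have hd1 : l = (a ++ [x]) ++ y :: b2 := by rw [hab]; simp
  have hd2 : l = (a' ++ [x']) ++ y :: b2' := by rw [hab']; simp
  have hyn1 : y ∉ a ++ [x] := by
    have hnd2 : ((a ++ [x]) ++ y :: b2).Nodup := hd1 ▸ hnd
    rw [List.nodup_append] at hnd2
    exact fun h => hnd2.2.2 y h y List.mem_cons_self rfl
  have hyn2 : y ∉ a' ++ [x'] := by
    have hnd2 : ((a' ++ [x']) ++ y :: b2').Nodup := hd2 ▸ hnd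
    rw [List.nodup_append] at hnd2
    exact fun h => hnd2.2.2 y h y List.mem_cons_self rfl
  have htw1 := (tw_dw (a ++ [x]) b2 hyn1).1
  have htw2 := (tw_dw (a' ++ [x']) b2' hyn2).1
  rw [← hd1] at htw1
  rw [← hd2] at htw2
  have haeq : a ++ [x] = a' ++ [x'] := by rw [← htw1, ← htw2]
  have := congrArg List.getLast? haeq
  rw [List.getLast?_concat, List.getLast?_concat] at this
  injection this

end Part5

section Part6
variable {V : Type*} [Fintype V] [DecidableEq V]

lemma two_from_end {l : List V} (h : 2 ≤ l.length) : ∃ c p w, l = c ++ [p, w] := by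
  rcases hrb : l.reverse with _ | ⟨r0, rs⟩
  · exfalso
    have : l = [] := by
      have := congrArg List.reverse hrb
      simpa using this
    rw [this] at h
    simp at h
  rcases rs with _ | ⟨r1, rr⟩
  · exfalso
    have : l = [r0] := by
      have := congrArg List.reverse hrb
      simpa using this
    rw [this] at h
    simp at h
  · refine ⟨rr.reverse, r1, r0, ?_⟩
    have := congrArg List.reverse hrb
    simpa using this

variable {G : SimpleGraph V} {u v : V}

lemma closes_iff {l : List V} {w : V} (hlw : l.getLast? = some w) :
    Closes G u l ↔ G.Adj w u := by
  constructor
  · intro h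
    exact h w hlw
  · intro h w' hw'
    have : some w = some w' := by rw [← hlw]; exact hw'
    have hww : w = w' := by injection this
    rw [← hww]
    exact h

/-- The type of Hamiltonian paths of `G` with first edge `u v`. -/
abbrev XT (G : SimpleGraph V) (u v : V) : Type _ := {l : List V // HamPath G u v l}

noncomputable instance : Fintype (XT G u v) := by
  have hfin : {l : List V | HamPath G u v l}.Finite :=
    Set.Finite.subset (List.finite_length_eq V (Fintype.card V)) (fun l hl => hl.2.1)
  exact hfin.fintype

/-- Thomason's lollipop graph on Hamiltonian paths. -/
def LG (G : SimpleGraph V) (u v : V) : SimpleGraph (XT G u v) where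
  Adj l l' := l.1 ≠ l'.1 ∧ ∃ a x b, l.1 = a ++ x :: b ∧ l'.1 = a ++ x :: b.reverse
  symm := ⟨by
    rintro l l' ⟨hne, a, x, b, h1, h2⟩
    exact ⟨hne.symm, a, x, b.reverse, h2, by rw [List.reverse_reverse]; exact h1⟩⟩
  loopless := ⟨fun l h => h.1 rfl⟩

open scoped Classical in
lemma lollipop_ncard (hcubic : ∀ z, (G.neighborSet z).ncard = 3) (hn : 4 ≤ Fintype.card V)
    (l : XT G u v) :
    ((LG G u v).neighborSet l).ncard = if Closes G u l.1 then 1 else 2 := by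
  obtain ⟨hnd, hlen, hch, ht2⟩ := l.2
  obtain ⟨t0, hcons⟩ := take_two_cons ht2
  obtain ⟨c, p, w, hdec⟩ := two_from_end (l := l.1) (by omega)
  have hp : HamPath G u v l.1 := ⟨hnd, hlen, hch, ht2⟩
  have hlw : l.1.getLast? = some w := by
    rw [hdec, show c ++ [p, w] = (c ++ [p]) ++ [w] by simp, List.getLast?_concat]
  -- adjacency of p and w
  have hpw : G.Adj p w := by
    have hch2 : List.IsChain G.Adj (c ++ [p, w]) := hdec ▸ hch
    rw [List.isChain_append] at hch2
    exact List.isChain_pair.mp hch2.2.1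
  -- u ≠ p
  have hup : u ≠ p := by
    rcases c with _ | ⟨c0, c'⟩
    · exfalso
      rw [hdec] at hlen
      simp at hlen
      omega
    rcases c' with _ | ⟨c1, c2⟩
    · exfalso
      rw [hdec] at hlen
      simp at hlen
      omega
    · rw [hcons] at hdec
      simp at hdec
      obtain ⟨hc0, hc1, ht0⟩ := hdec
      -- l.1 = u :: v :: t0 with t0 = c2 ++ [p, w]
      rw [hcons] at hnd
      intro hupeq
      have hpmem : u ∈ t0 := by rw [ht0, ← hupeq]; simp
      exact (List.nodup_cons.mp hnd).1 (List.mem_cons_of_mem _ hpmem)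
  -- the neighbor set, pushed to lists
  have himg : Subtype.val '' ((LG G u v).neighborSet l) =
      rotFun l.1 '' (G.neighborSet w \ {u, p}) := by
    ext z
    constructor
    · rintro ⟨l', hl', rfl⟩
      obtain ⟨hnel, a, x, b, hab, hab'⟩ := hl'
      obtain ⟨⟨hwx, hxu, hxp⟩, heq⟩ :=
        rot_backward hn hp l'.2 hdec hcons hab hab' (Ne.symm hnel)
      exact ⟨x, ⟨hwx, by simp [hxu, hxp]⟩, heq.symm⟩
    · rintro ⟨x, ⟨hxw, hx2⟩, rfl⟩
      simp only [Set.mem_insert_iff, Set.mem_singleton_iff] at hx2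
      push_neg at hx2
      obtain ⟨hp', hne', a, b, hab, hrot⟩ :=
        rot_forward hn hp hdec hcons hxw hx2.1 hx2.2
      exact ⟨⟨rotFun l.1 x, hp'⟩, ⟨Ne.symm hne', a, x, b, hab, hrot⟩, rfl⟩
  have hn1 : ((LG G u v).neighborSet l).ncard =
      (rotFun l.1 '' (G.neighborSet w \ {u, p})).ncard := by
    rw [← himg, Set.ncard_image_of_injective _ Subtype.val_injective]
  have hn2 : (rotFun l.1 '' (G.neighborSet w \ {u, p})).ncard =
      (G.neighborSet w \ {u, p}).ncard := by
    apply Set.ncard_image_of_injOn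
    intro x hx y hy hxy
    exact rot_inj hp hdec hx.1 hy.1 hxy
  rw [hn1, hn2]
  -- now count
  have hcl : Closes G u l.1 ↔ G.Adj w u := closes_iff hlw
  by_cases hwu : G.Adj w u
  · rw [if_pos (hcl.mpr hwu)]
    have hsub : ({u, p} : Set V) ⊆ G.neighborSet w := by
      rintro z (rfl | rfl)
      · exact hwu
      · exact hpw.symm
    rw [Set.ncard_diff hsub (Set.toFinite _), hcubic w, Set.ncard_pair hup]
  · rw [if_neg (fun hc => hwu (hcl.mp hc))]
    have hSeq : G.neighborSet w \ {u, p} = G.neighborSet w \ {p} := by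
      ext z
      simp only [Set.mem_diff, Set.mem_insert_iff, Set.mem_singleton_iff]
      constructor
      · rintro ⟨h1, h2⟩
        exact ⟨h1, fun h => h2 (Or.inr h)⟩
      · rintro ⟨h1, h2⟩
        refine ⟨h1, ?_⟩
        rintro (rfl | rfl)
        · exact hwu h1
        · exact h2 rfl
    rw [hSeq, Set.ncard_diff (by simpa using hpw.symm) (Set.toFinite _), hcubic w]
    simp

lemma even_closers (G : SimpleGraph V) (u v : V)
    (hcubic : ∀ z, (G.neighborSet z).ncard = 3) (hn : 4 ≤ Fintype.card V) :
    Even (Nat.card {l : List V // HamPath G u v l ∧ Closes G u l}) := by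
  classical
  letI : DecidableRel (LG G u v).Adj := Classical.decRel _
  have hand := SimpleGraph.even_card_odd_degree_vertices (LG G u v)
  have hdeg : ∀ l : XT G u v, Odd ((LG G u v).degree l) ↔ Closes G u l.1 := by
    intro l
    have h1 : ((LG G u v).neighborSet l).ncard = (LG G u v).degree l := by
      rw [Set.ncard_eq_toFinset_card']
      rfl
    have h2 := lollipop_ncard hcubic hn l
    rw [h1] at h2
    by_cases hc : Closes G u l.1
    · rw [if_pos hc] at h2
      refine ⟨fun _ => hc, fun _ => ?_⟩
      rw [h2]
      exact odd_one
    · rw [if_neg hc] at h2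
      refine ⟨fun hodd => ?_, fun h => absurd h hc⟩
      rw [h2] at hodd
      exact absurd hodd (by norm_num)
  have h1 : Nat.card {l : List V // HamPath G u v l ∧ Closes G u l}
      = Nat.card {x : XT G u v // Closes G u x.1} :=
    Nat.card_congr (Equiv.subtypeSubtypeEquivSubtypeInter _ _).symm
  have h2 : Nat.card {x : XT G u v // Closes G u x.1} =
      (Finset.filter (fun x : XT G u v => Closes G u x.1) Finset.univ).card := by
    rw [Nat.card_eq_fintype_card, Fintype.card_subtype]
  have h3 : Finset.filter (fun x : XT G u v => Closes G u x.1) Finset.univ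
      = Finset.filter (fun x => Odd ((LG G u v).degree x)) Finset.univ :=
    Finset.filter_congr (fun x _ => (hdeg x).symm)
  rw [h1, h2, h3]
  exact hand

end Part6

section Part7
variable {V : Type*} [Fintype V] [DecidableEq V]

lemma even_through {G : SimpleGraph V} (hcubic : ∀ z, (G.neighborSet z).ncard = 3)
    (hn : 4 ≤ Fintype.card V) (u v : V) :
    Even (Nat.card {H : SimpleGraph V // IsHamiltonianCycleSubgraph G H ∧ H.Adj u v}) := by
  classical
  haveI : NeZero (Fintype.card V) := ⟨by omega⟩
  have hn3 : 3 ≤ Fintype.card V := by omega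
  -- the map from closing Hamiltonian paths to Hamiltonian cycle subgraphs
  have hne_of : ∀ {l : List V}, HamPath G u v l → l ≠ [] := by
    intro l hp h
    rw [h] at hp
    have := hp.2.1
    simp at this
    omega
  have hhead : ∀ {l : List V} (hp : HamPath G u v l), l.head (hne_of hp) = u := by
    intro l hp
    obtain ⟨t, ht⟩ := take_two_cons hp.2.2.2
    subst ht
    rfl
  have hclose : ∀ {l : List V} (hp : HamPath G u v l), Closes G u l →
      G.Adj (l.getLast (hne_of hp)) (l.head (hne_of hp)) := by
    intro l hp hc
    rw [hhead hp]
    exact hc _ (by rw [List.getLast?_eq_getLast (hne_of hp)]; rfl)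
  set f : {l : List V // HamPath G u v l ∧ Closes G u l} →
      {H : SimpleGraph V // IsHamiltonianCycleSubgraph G H ∧ H.Adj u v} :=
    fun lp => ⟨HofL lp.1 ⟨lp.2.1.1, lp.2.1.2.1⟩, by
      obtain ⟨l, hp, hc⟩ := lp
      refine ⟨⟨?_, ?_, ?_⟩, ?_⟩
      · exact HofL_le _ hn3 hp.2.2.1 (hne_of hp) (hclose hp hc)
      · exact HofL_connected _ hn3
      · exact HofL_regular _ hn3
      · -- adjacency of u and v
        obtain ⟨t, ht⟩ := take_two_cons hp.2.2.2
        have hch := HofL_chain' (l := l) ⟨hp.1, hp.2.1⟩ hn3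
        have hch2 : List.IsChain (HofL l ⟨hp.1, hp.2.1⟩).Adj (u :: v :: t) := by
          rw [← ht]; exact hch
        exact (List.isChain_cons.mp hch2).1 v rfl⟩ with hf
  have hbij : Function.Bijective f := by
    constructor
    · rintro ⟨l, hp, hc⟩ ⟨l', hp', hc'⟩ heq
      have heq2 : HofL l ⟨hp.1, hp.2.1⟩ = HofL l' ⟨hp'.1, hp'.2.1⟩ := by
        have := congrArg Subtype.val heq
        exact this
      apply Subtype.ext
      refine chain_eq (K := HofL l ⟨hp.1, hp.2.1⟩) (HofL_regular _ hn3)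
        hp.1 hp.2.1 (HofL_chain' _ hn3) hp.2.2.2 hp'.1 hp'.2.1 ?_ hp'.2.2.2
      rw [heq2]
      exact HofL_chain' _ hn3
    · rintro ⟨H, ⟨hle, hconn, hreg⟩, hAdj⟩
      obtain ⟨l, ⟨hnodup, hlen⟩, hchainH, htake, hclosesH⟩ :=
        exists_hamlist hreg hconn hAdj (by omega)
      have hp : HamPath G u v l :=
        ⟨hnodup, hlen, hchainH.imp (fun a b h => hle h), htake⟩
      have hc : Closes G u l := fun w hw => hle (hclosesH w hw)
      refine ⟨⟨l, hp, hc⟩, ?_⟩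
      apply Subtype.ext
      show HofL l ⟨hp.1, hp.2.1⟩ = H
      apply two_regular_eq
      · refine HofL_le _ hn3 hchainH (hne_of hp) ?_
        rw [hhead hp]
        exact hclosesH _ (by rw [List.getLast?_eq_getLast (hne_of hp)]; rfl)
      · exact HofL_regular _ hn3
      · exact hreg
  rw [← Nat.card_congr (Equiv.ofBijective f hbij)]
  exact even_closers G u v hcubic hn

end Part7

/-- Smith's theorem: a finite cubic graph with a Hamilton cycle has at least three
Hamilton cycles. -/
theorem smith_at_least_three_hamilton_cycles {V : Type*} [Fintype V] (G : SimpleGraph V)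
    (hcubic : ∀ v : V, (G.neighborSet v).ncard = 3)
    (hham : ∃ H : SimpleGraph V, IsHamiltonianCycleSubgraph G H) :
    3 ≤ hamCount G := by
  classical
  obtain ⟨H0, hH0⟩ := hham
  have hH0' := hH0
  obtain ⟨hle0, hconn0, hreg0⟩ := hH0'
  haveI : Nonempty V := hconn0.nonempty
  -- the graph has at least 4 vertices
  have hn : 4 ≤ Fintype.card V := by
    obtain ⟨x⟩ := ‹Nonempty V›
    obtain ⟨a, b, c, hab, hac, hbc, hset⟩ := Set.ncard_eq_three.mp (hcubic x)
    have hmem : ∀ z ∈ ({a, b, c} : Set V), G.Adj x z := by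
      intro z hz
      rw [← hset] at hz
      exact hz
    have hax : a ≠ x := (hmem a (by simp)).ne'
    have hbx : b ≠ x := (hmem b (by simp)).ne'
    have hcx : c ≠ x := (hmem c (by simp)).ne'
    have hcard : ({x, a, b, c} : Finset V).card = 4 := by
      rw [Finset.card_insert_of_notMem (by
        simp only [Finset.mem_insert, Finset.mem_singleton]
        push_neg
        exact ⟨Ne.symm hax, Ne.symm hbx, Ne.symm hcx⟩)]
      rw [Finset.card_insert_of_notMem (by
        simp only [Finset.mem_insert, Finset.mem_singleton]
        push_neg
        exact ⟨hab, hac⟩)]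
      rw [Finset.card_insert_of_notMem (by simp [hbc]), Finset.card_singleton]
    calc 4 = ({x, a, b, c} : Finset V).card := hcard.symm
      _ ≤ Fintype.card V := Finset.card_le_univ _
  -- an edge of H0
  obtain ⟨u⟩ := ‹Nonempty V›
  have hne : (H0.neighborSet u).Nonempty :=
    Set.nonempty_of_ncard_ne_zero (by rw [hreg0 u]; norm_num)
  obtain ⟨v, hv⟩ := hne
  -- the key step: any Hamilton cycle through an edge has a companion
  have key : ∀ (a b : V) (K : SimpleGraph V), IsHamiltonianCycleSubgraph G K → K.Adj a b →
      ∃ K', IsHamiltonianCycleSubgraph G K' ∧ K'.Adj a b ∧ K' ≠ K := by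
    intro a b K hK hKab
    have hev := even_through hcubic hn a b
    haveI : Nonempty {H : SimpleGraph V // IsHamiltonianCycleSubgraph G H ∧ H.Adj a b} :=
      ⟨⟨K, hK, hKab⟩⟩
    have hpos : 0 < Nat.card {H : SimpleGraph V // IsHamiltonianCycleSubgraph G H ∧ H.Adj a b} :=
      Nat.card_pos
    have h2 : 1 < Nat.card {H : SimpleGraph V // IsHamiltonianCycleSubgraph G H ∧ H.Adj a b} := by
      obtain ⟨k, hk⟩ := hev
      omega
    haveI hnt := Finite.one_lt_card_iff_nontrivial.mp h2
    obtain ⟨y, hy⟩ := exists_ne (⟨K, hK, hKab⟩ :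
      {H : SimpleGraph V // IsHamiltonianCycleSubgraph G H ∧ H.Adj a b})
    exact ⟨y.1, y.2.1, y.2.2, fun h => hy (Subtype.ext h)⟩
  obtain ⟨H1, hH1, hH1uv, hH1ne⟩ := key u v H0 hH0 hv
  -- an edge of H0 not in H1
  have hedge : ∃ a b, H0.Adj a b ∧ ¬ H1.Adj a b := by
    by_contra hcon
    push_neg at hcon
    have hle : H0 ≤ H1 := fun {a b} hab => hcon a b hab
    exact hH1ne (two_regular_eq hle hreg0 hH1.2.2).symm
  obtain ⟨a, b, hab0, hab1⟩ := hedge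
  obtain ⟨H2, hH2, hH2ab, hH2ne0⟩ := key a b H0 hH0 hab0
  have hH2ne1 : H2 ≠ H1 := fun h => hab1 (h ▸ hH2ab)
  -- conclude
  letI : Fintype {H : SimpleGraph V // IsHamiltonianCycleSubgraph G H} := Fintype.ofFinite _
  have hcard3 : ({⟨H0, hH0⟩, ⟨H1, hH1⟩, ⟨H2, hH2⟩} :
      Finset {H : SimpleGraph V // IsHamiltonianCycleSubgraph G H}).card = 3 := by
    rw [Finset.card_insert_of_notMem (by
      simp only [Finset.mem_insert, Finset.mem_singleton, Subtype.ext_iff]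
      push_neg
      exact ⟨Ne.symm hH1ne, Ne.symm hH2ne0⟩)]
    rw [Finset.card_insert_of_notMem (by
      simp only [Finset.mem_singleton, Subtype.ext_iff]
      exact Ne.symm hH2ne1)]
    rw [Finset.card_singleton]
  have : hamCount G = Fintype.card {H : SimpleGraph V // IsHamiltonianCycleSubgraph G H} := by
    rw [hamCount, Nat.card_eq_fintype_card]
  rw [this]
  calc 3 = ({⟨H0, hH0⟩, ⟨H1, hH1⟩, ⟨H2, hH2⟩} :
      Finset {H : SimpleGraph V // IsHamiltonianCycleSubgraph G H}).card := hcard3.symm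
    _ ≤ Fintype.card {H : SimpleGraph V // IsHamiltonianCycleSubgraph G H} :=
      Finset.card_le_univ _
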